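/- For every n ≥ 1 and every subset I of {1,…,n-1}, the number of permutations of {1,…,n} whose set of successions is exactly I equals the number of permutations of {1,…,n} whose set of fixed points intersected with {1,…,n-1} is exactly I. Here the succession set of σ is M(σ) = {i : 1 ≤ i ≤ n-1, σ(i)+1 = σ(i+1)}, and G(σ) = {i : 1 ≤ i ≤ n-1, σ(i) = i}. -/

import Mathlib

open Finset

/-- The value `σ(i)` of a permutation of `{1,…,n}` at a one-based position `i`,
with the convention `σ(0) = 0` (and value `0` outside `[1,n]`). -/
def pv {n : ℕ} (σ : Equiv.Perm (Fin n)) (i : ℕ) : ℕ :=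
  if h : 1 ≤ i ∧ i ≤ n then ((σ ⟨i - 1, by omega⟩ : Fin n) : ℕ) + 1 else 0

/-- The set of (interior) successions: `M(σ) = {1 ≤ i ≤ n-1 : σ(i)+1 = σ(i+1)}`. -/
def Mset {n : ℕ} (σ : Equiv.Perm (Fin n)) : Finset ℕ :=
  (Finset.Icc 1 (n - 1)).filter (fun i => pv σ i + 1 = pv σ (i + 1))

/-- The set of fixed points in `[n-1]`: `G(σ) = {1 ≤ i ≤ n-1 : σ(i) = i}`. -/
def Gset {n : ℕ} (σ : Equiv.Perm (Fin n)) : Finset ℕ :=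
  (Finset.Icc 1 (n - 1)).filter (fun i => pv σ i = i)

namespace DEG

/-- zero-based value of a permutation, junk value `n` out of range -/
def pV {n : ℕ} (σ : Equiv.Perm (Fin n)) (p : ℕ) : ℕ :=
  if h : p < n then ((σ ⟨p, h⟩ : Fin n) : ℕ) else n

lemma pv_eq {n : ℕ} (σ : Equiv.Perm (Fin n)) {i : ℕ} (h1 : 1 ≤ i) (h2 : i ≤ n) :
    pv σ i = pV σ (i - 1) + 1 := by
  rw [pv, dif_pos ⟨h1, h2⟩, pV, dif_pos (by omega)]

lemma pV_lt {n : ℕ} (σ : Equiv.Perm (Fin n)) {p : ℕ} (hp : p < n) : pV σ p < n := by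
  rw [pV, dif_pos hp]; exact (σ ⟨p, hp⟩).isLt

lemma pV_inj {n : ℕ} (σ : Equiv.Perm (Fin n)) {p q : ℕ} (hp : p < n) (hq : q < n)
    (h : pV σ p = pV σ q) : p = q := by
  rw [pV, dif_pos hp, pV, dif_pos hq] at h
  have := σ.injective (Fin.val_injective h)
  exact congrArg Fin.val this

lemma subset_Mset_iff {n : ℕ} {I : Finset ℕ} (hI : I ⊆ Finset.Icc 1 (n - 1)) (hn : 1 ≤ n)
    (σ : Equiv.Perm (Fin n)) :
    I ⊆ Mset σ ↔ ∀ j, j + 1 ∈ I → pV σ (j + 1) = pV σ j + 1 := by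
  constructor
  · intro h j hj
    have hji := mem_Icc.mp (hI hj)
    have hm := h hj
    rw [Mset, mem_filter] at hm
    have hc := hm.2
    rw [pv_eq σ (by omega) (by omega), pv_eq σ (by omega) (by omega)] at hc
    simp only [Nat.add_sub_cancel] at hc
    omega
  · intro h i hi
    have hii := mem_Icc.mp (hI hi)
    rw [Mset, mem_filter]
    refine ⟨mem_Icc.mpr hii, ?_⟩
    rw [pv_eq σ (by omega) (by omega), pv_eq σ (by omega) (by omega)]
    simp only [Nat.add_sub_cancel]
    have h2 := h (i - 1) (by simpa [Nat.sub_add_cancel hii.1] using hi)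
    rw [Nat.sub_add_cancel hii.1] at h2
    omega

lemma subset_Gset_iff {n : ℕ} {I : Finset ℕ} (hI : I ⊆ Finset.Icc 1 (n - 1)) (hn : 1 ≤ n)
    (σ : Equiv.Perm (Fin n)) :
    I ⊆ Gset σ ↔ ∀ j, j + 1 ∈ I → pV σ j = j := by
  constructor
  · intro h j hj
    have hji := mem_Icc.mp (hI hj)
    have hm := h hj
    rw [Gset, mem_filter] at hm
    have hc := hm.2
    rw [pv_eq σ (by omega) (by omega)] at hc
    simp only [Nat.add_sub_cancel] at hc
    omega
  · intro h i hi
    have hii := mem_Icc.mp (hI hi)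
    rw [Gset, mem_filter]
    refine ⟨mem_Icc.mpr hii, ?_⟩
    rw [pv_eq σ (by omega) (by omega)]
    have := h (i - 1) (by simpa [Nat.sub_add_cancel hii.1] using hi)
    omega

/-- block start function -/
def st (I : Finset ℕ) : ℕ → ℕ
  | 0 => 0
  | (j+1) => if j + 1 ∈ I then st I j else j + 1

lemma st_succ_mem {I : Finset ℕ} {j : ℕ} (h : j + 1 ∈ I) : st I (j+1) = st I j := by
  simp [st, h]

lemma st_succ_not {I : Finset ℕ} {j : ℕ} (h : j + 1 ∉ I) : st I (j+1) = j + 1 := by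
  simp [st, h]

lemma st_le (I : Finset ℕ) : ∀ p, st I p ≤ p
  | 0 => le_refl 0
  | (j+1) => by
      by_cases h : j + 1 ∈ I
      · rw [st_succ_mem h]; exact (st_le I j).trans (by omega)
      · rw [st_succ_not h]

lemma st_not_mem {I : Finset ℕ} (h0 : 0 ∉ I) : ∀ p, st I p ∉ I
  | 0 => h0
  | (j+1) => by
      by_cases h : j + 1 ∈ I
      · rw [st_succ_mem h]; exact st_not_mem h0 j
      · rwa [st_succ_not h]

lemma st_eq_self {I : Finset ℕ} {p : ℕ} (h : p ∉ I) : st I p = p := by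
  cases p with
  | zero => rfl
  | succ j => exact st_succ_not h

lemma st_between {I : Finset ℕ} : ∀ p q, st I p ≤ q → q ≤ p → st I q = st I p
  | 0, q, _, h2 => by
      have : q = 0 := by omega
      rw [this]
  | (j+1), q, h1, h2 => by
      rcases Nat.eq_or_lt_of_le h2 with h | h
      · rw [h]
      · by_cases hm : j + 1 ∈ I
        · rw [st_succ_mem hm] at h1 ⊢
          exact st_between j q h1 (by omega)
        · rw [st_succ_not hm] at h1; omega

/-- The set of block starts (0-based). -/
def Cst (n : ℕ) (I : Finset ℕ) : Finset ℕ := (range n).filter (fun j => j ∉ I)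

/-- The length of the block starting at `s`. -/
def Lb (n : ℕ) (I : Finset ℕ) (s : ℕ) : ℕ := ((range n).filter (fun p => st I p = s)).card

lemma st_mem_Cst {n : ℕ} {I : Finset ℕ} (h0 : 0 ∉ I) {p : ℕ} (hp : p < n) :
    st I p ∈ Cst n I :=
  mem_filter.mpr ⟨mem_range.mpr (lt_of_le_of_lt (st_le I p) hp), st_not_mem h0 p⟩

lemma Cst_card {n : ℕ} {I : Finset ℕ} (hIn : ∀ i ∈ I, 1 ≤ i ∧ i < n) :
    (Cst n I).card = n - I.card := by
  have h1 : (range n).filter (fun j => j ∈ I) = I := by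
    ext j
    simp only [mem_filter, mem_range]
    exact ⟨fun h => h.2, fun h => ⟨(hIn j h).2, h⟩⟩
  have h2 := card_filter_add_card_filter_not (s := range n) (p := fun j => j ∈ I)
  rw [h1, card_range] at h2
  have : (Cst n I).card = (filter (fun j => ¬ j ∈ I) (range n)).card := rfl
  omega

variable {n m : ℕ} {I : Finset ℕ}

/-- The `a`-th smallest block start. -/
def eS (hc : (Cst n I).card = m) (a : Fin m) : ℕ := ((Cst n I).orderIsoOfFin hc a : ℕ)

lemma eS_mem (hc : (Cst n I).card = m) (a : Fin m) : eS hc a ∈ Cst n I :=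
  ((Cst n I).orderIsoOfFin hc a).2

lemma eS_lt_n (hc : (Cst n I).card = m) (a : Fin m) : eS hc a < n :=
  mem_range.mp (mem_filter.mp (eS_mem hc a)).1

lemma eS_not_mem (hc : (Cst n I).card = m) (a : Fin m) : eS hc a ∉ I :=
  (mem_filter.mp (eS_mem hc a)).2

lemma eS_st (hc : (Cst n I).card = m) (a : Fin m) : st I (eS hc a) = eS hc a :=
  st_eq_self (eS_not_mem hc a)

lemma eS_inj (hc : (Cst n I).card = m) {a b : Fin m} (h : eS hc a = eS hc b) : a = b :=
  ((Cst n I).orderIsoOfFin hc).toEquiv.injective (Subtype.ext h)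

lemma eS_surj (hc : (Cst n I).card = m) {s : ℕ} (hs : s ∈ Cst n I) :
    ∃ a : Fin m, eS hc a = s :=
  ⟨((Cst n I).orderIsoOfFin hc).symm ⟨s, hs⟩, by
    simp [eS]⟩

lemma sum_Lb (h0 : 0 ∉ I) (hc : (Cst n I).card = m) :
    ∑ a : Fin m, Lb n I (eS hc a) = n := by
  have h1 : (range n).card = ∑ s ∈ Cst n I, ((range n).filter (fun p => st I p = s)).card :=
    card_eq_sum_card_fiberwise (fun p hp => st_mem_Cst h0 (mem_range.mp hp))
  have h2 : ∑ a : Fin m, Lb n I (eS hc a) = ∑ s ∈ Cst n I, Lb n I s := by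
    apply sum_bij (fun (a : Fin m) _ => eS hc a)
    · exact fun a _ => eS_mem hc a
    · exact fun a _ b _ h => eS_inj hc h
    · intro s hs
      obtain ⟨a, ha⟩ := eS_surj hc hs
      exact ⟨a, mem_univ a, ha⟩
    · exact fun a _ => rfl
  rw [h2]
  rw [card_range] at h1
  exact (h1.symm.trans rfl)

lemma Lb_pos {s : ℕ} (hs : s ∈ Cst n I) : 0 < Lb n I s := by
  apply card_pos.mpr
  exact ⟨s, mem_filter.mpr ⟨(mem_filter.mp hs).1, st_eq_self (mem_filter.mp hs).2⟩⟩

lemma off_lt_Lb (h0 : 0 ∉ I) {p : ℕ} (hp : p < n) : p - st I p < Lb n I (st I p) := by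
  have hsub : Icc (st I p) p ⊆ (range n).filter (fun q => st I q = st I p) := by
    intro q hq
    rw [mem_Icc] at hq
    exact mem_filter.mpr ⟨mem_range.mpr (lt_of_le_of_lt hq.2 hp), st_between p q hq.1 hq.2⟩
  have := card_le_card hsub
  rw [Nat.card_Icc] at this
  have h2 := st_le I p
  unfold Lb
  omega

/-- The left endpoint of the interval of values assigned to block `a` by `τ`. -/
def Vv (hc : (Cst n I).card = m) (τ : Equiv.Perm (Fin m)) (a : Fin m) : ℕ :=
  ∑ b ∈ univ.filter (fun b => τ b < τ a), Lb n I (eS hc b)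

lemma Vv_add_le (h0 : 0 ∉ I) (hc : (Cst n I).card = m) (τ : Equiv.Perm (Fin m)) (a : Fin m) :
    Vv hc τ a + Lb n I (eS hc a) ≤ n := by
  have hna : a ∉ univ.filter (fun b => τ b < τ a) := by simp
  have h1 : Vv hc τ a + Lb n I (eS hc a)
      = ∑ b ∈ insert a (univ.filter (fun b => τ b < τ a)), Lb n I (eS hc b) := by
    rw [sum_insert hna, Vv]; omega
  rw [h1]
  exact le_trans (sum_le_sum_of_subset (subset_univ _)) (le_of_eq (sum_Lb h0 hc))

lemma Vv_lt (hc : (Cst n I).card = m) {τ : Equiv.Perm (Fin m)} {a b : Fin m}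
    (h : τ a < τ b) : Vv hc τ a + Lb n I (eS hc a) ≤ Vv hc τ b := by
  have hna : a ∉ univ.filter (fun c => τ c < τ a) := by simp
  have h1 : Vv hc τ a + Lb n I (eS hc a)
      = ∑ c ∈ insert a (univ.filter (fun c => τ c < τ a)), Lb n I (eS hc c) := by
    rw [sum_insert hna, Vv]; omega
  rw [h1, Vv]
  apply sum_le_sum_of_subset
  intro c hc'
  rcases mem_insert.mp hc' with h' | h'
  · subst h'; simpa using h
  · simp only [mem_filter, mem_univ, true_and] at h' ⊢
    exact h'.trans h

lemma Vv_mono (hc : (Cst n I).card = m) {τ : Equiv.Perm (Fin m)} {a b : Fin m}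
    (h : τ a ≤ τ b) : Vv hc τ a ≤ Vv hc τ b := by
  apply sum_le_sum_of_subset
  intro c hc'
  simp only [mem_filter, mem_univ, true_and] at hc' ⊢
  exact lt_of_lt_of_le hc' h

/-- The block index of position `p`. -/
def blk (hc : (Cst n I).card = m) (h0 : 0 ∉ I) (p : ℕ) (hp : p < n) : Fin m :=
  ((Cst n I).orderIsoOfFin hc).symm ⟨st I p, st_mem_Cst h0 hp⟩

lemma eS_blk (hc : (Cst n I).card = m) (h0 : 0 ∉ I) (p : ℕ) (hp : p < n) :
    eS hc (blk hc h0 p hp) = st I p := by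
  simp [eS, blk]

def gfun (hc : (Cst n I).card = m) (h0 : 0 ∉ I) (τ : Equiv.Perm (Fin m)) (p : Fin n) : Fin n :=
  ⟨Vv hc τ (blk hc h0 p.1 p.2) + (p.1 - st I p.1), by
    have h1 := off_lt_Lb h0 p.2
    have h2 := Vv_add_le h0 hc τ (blk hc h0 p.1 p.2)
    rw [eS_blk] at h2
    omega⟩

lemma gfun_inj (hc : (Cst n I).card = m) (h0 : 0 ∉ I) (τ : Equiv.Perm (Fin m)) :
    Function.Injective (gfun hc h0 τ) := by
  intro p q h
  have hval : Vv hc τ (blk hc h0 p.1 p.2) + (p.1 - st I p.1)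
      = Vv hc τ (blk hc h0 q.1 q.2) + (q.1 - st I q.1) := congrArg Fin.val h
  rcases lt_trichotomy (τ (blk hc h0 p.1 p.2)) (τ (blk hc h0 q.1 q.2)) with hlt | heq | hgt
  · exfalso
    have h1 := Vv_lt hc hlt
    rw [eS_blk] at h1
    have h2 := off_lt_Lb h0 p.2
    omega
  · have hb : blk hc h0 p.1 p.2 = blk hc h0 q.1 q.2 := τ.injective heq
    have hst : st I p.1 = st I q.1 := by
      rw [← eS_blk hc h0 p.1 p.2, ← eS_blk hc h0 q.1 q.2, hb]
    rw [hb, hst] at hval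
    have h3 := st_le I p.1
    have h4 := st_le I q.1
    rw [hst] at h3
    exact Fin.ext (by omega)
  · exfalso
    have h1 := Vv_lt hc hgt
    rw [eS_blk] at h1
    have h2 := off_lt_Lb h0 q.2
    omega

/-- The permutation with prescribed successions built from `τ`. -/
noncomputable def Psi (hc : (Cst n I).card = m) (h0 : 0 ∉ I) (τ : Equiv.Perm (Fin m)) : Equiv.Perm (Fin n) :=
  Equiv.ofBijective (gfun hc h0 τ) (Finite.injective_iff_bijective.mp (gfun_inj hc h0 τ))

lemma pV_Psi (hc : (Cst n I).card = m) (h0 : 0 ∉ I) (τ : Equiv.Perm (Fin m)) {p : ℕ}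
    (hp : p < n) : pV (Psi hc h0 τ) p = Vv hc τ (blk hc h0 p hp) + (p - st I p) := by
  rw [pV, dif_pos hp]
  rfl

lemma Psi_mem (hc : (Cst n I).card = m) (h0 : 0 ∉ I) (hIn : ∀ i ∈ I, 1 ≤ i ∧ i < n)
    (τ : Equiv.Perm (Fin m)) :
    ∀ j, j + 1 ∈ I → pV (Psi hc h0 τ) (j + 1) = pV (Psi hc h0 τ) j + 1 := by
  intro j hj
  have hj1 : j + 1 < n := (hIn _ hj).2
  have hj0 : j < n := by omega
  rw [pV_Psi hc h0 τ hj1, pV_Psi hc h0 τ hj0]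
  have hst : st I (j + 1) = st I j := st_succ_mem hj
  have hblk : blk hc h0 (j + 1) hj1 = blk hc h0 j hj0 := by
    unfold blk
    congr 1
    exact Subtype.ext hst
  rw [hblk, hst]
  have := st_le I j
  omega

lemma pV_block {σ : Equiv.Perm (Fin n)}
    (hA : ∀ j, j + 1 ∈ I → pV σ (j + 1) = pV σ j + 1) :
    ∀ p, p < n → pV σ p = pV σ (st I p) + (p - st I p) := by
  intro p
  induction p with
  | zero => intro _; simp [st]
  | succ j ih =>
    intro hj1
    by_cases hj : j + 1 ∈ I
    · rw [hA j hj, ih (by omega), st_succ_mem hj]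
      have := st_le I j
      omega
    · rw [st_succ_not hj]
      omega

/-- Rank of the value at the `a`-th block start. -/
def rk (hc : (Cst n I).card = m) (σ : Equiv.Perm (Fin n)) (a : Fin m) : ℕ :=
  (univ.filter (fun b => pV σ (eS hc b) < pV σ (eS hc a))).card

lemma rk_lt (hc : (Cst n I).card = m) (σ : Equiv.Perm (Fin n)) (a : Fin m) :
    rk hc σ a < m := by
  have hsub : univ.filter (fun b => pV σ (eS hc b) < pV σ (eS hc a)) ⊆ univ.erase a := by
    intro b hb
    simp only [mem_filter, mem_univ, true_and] at hb
    apply mem_erase.mpr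
    refine ⟨fun hba => ?_, mem_univ b⟩
    rw [hba] at hb
    omega
  have h1 := card_le_card hsub
  rw [card_erase_of_mem (mem_univ a), card_univ, Fintype.card_fin] at h1
  have := a.isLt
  unfold rk
  omega

lemma rk_lt_rk (hc : (Cst n I).card = m) (σ : Equiv.Perm (Fin n)) {a b : Fin m}
    (h : pV σ (eS hc a) < pV σ (eS hc b)) : rk hc σ a < rk hc σ b := by
  have hna : a ∉ univ.filter (fun c => pV σ (eS hc c) < pV σ (eS hc a)) := by simp
  have hsub : insert a (univ.filter (fun c => pV σ (eS hc c) < pV σ (eS hc a)))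
      ⊆ univ.filter (fun c => pV σ (eS hc c) < pV σ (eS hc b)) := by
    intro c hcc
    rcases mem_insert.mp hcc with h' | h'
    · subst h'; simpa using h
    · simp only [mem_filter, mem_univ, true_and] at h' ⊢
      omega
  have := card_le_card hsub
  rw [card_insert_of_notMem hna] at this
  unfold rk
  omega

lemma rk_inj (hc : (Cst n I).card = m) (σ : Equiv.Perm (Fin n)) {a b : Fin m}
    (h : rk hc σ a = rk hc σ b) : a = b := by
  rcases lt_trichotomy (pV σ (eS hc a)) (pV σ (eS hc b)) with h' | h' | h'
  · exact absurd (rk_lt_rk hc σ h') (by omega)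
  · exact eS_inj hc (pV_inj σ (eS_lt_n hc a) (eS_lt_n hc b) h')
  · exact absurd (rk_lt_rk hc σ h') (by omega)

/-- The rank permutation of a permutation with prescribed successions. -/
noncomputable def Phi (hc : (Cst n I).card = m) (σ : Equiv.Perm (Fin n)) : Equiv.Perm (Fin m) :=
  Equiv.ofBijective (fun a => ⟨rk hc σ a, rk_lt hc σ a⟩)
    (Finite.injective_iff_bijective.mp (fun a b h => rk_inj hc σ (by
      have := congrArg Fin.val h
      simpa using this)))

lemma Phi_apply (hc : (Cst n I).card = m) (σ : Equiv.Perm (Fin n)) (a : Fin m) :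
    (Phi hc σ a : ℕ) = rk hc σ a := rfl

lemma pV_eq_val {σ : Equiv.Perm (Fin n)} {p : ℕ} (hp : p < n) :
    pV σ p = ((σ ⟨p, hp⟩ : Fin n) : ℕ) := dif_pos hp

lemma pV_apply_val (σ : Equiv.Perm (Fin n)) (x : Fin n) :
    pV σ (x : ℕ) = ((σ x : Fin n) : ℕ) := by
  rw [pV_eq_val x.isLt, Fin.eta]

lemma pV_Psi_eS (hc : (Cst n I).card = m) (h0 : 0 ∉ I) (τ : Equiv.Perm (Fin m)) (b : Fin m) :
    pV (Psi hc h0 τ) (eS hc b) = Vv hc τ b := by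
  rw [pV_Psi hc h0 τ (eS_lt_n hc b)]
  have hst := eS_st hc b
  have hblk : blk hc h0 (eS hc b) (eS_lt_n hc b) = b := by
    unfold blk
    have hsub : (⟨st I (eS hc b), st_mem_Cst h0 (eS_lt_n hc b)⟩ : ↥(Cst n I))
        = (Cst n I).orderIsoOfFin hc b := Subtype.ext hst
    calc ((Cst n I).orderIsoOfFin hc).symm ⟨st I (eS hc b), st_mem_Cst h0 (eS_lt_n hc b)⟩
        = ((Cst n I).orderIsoOfFin hc).symm ((Cst n I).orderIsoOfFin hc b) :=
          congrArg (fun x => ((Cst n I).orderIsoOfFin hc).symm x) hsub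
      _ = b := OrderIso.symm_apply_apply _ _
  rw [hblk, hst]
  omega

lemma card_lt_perm {m : ℕ} (τ : Equiv.Perm (Fin m)) (a : Fin m) :
    (univ.filter (fun b => τ b < τ a)).card = (τ a : ℕ) := by
  rw [← card_range (τ a : ℕ)]
  refine card_bij' (fun b _ => ((τ b : Fin m) : ℕ))
    (fun v hv => τ.symm ⟨v, lt_trans (mem_range.mp hv) (τ a).isLt⟩) ?_ ?_ ?_ ?_
  · intro b hb
    exact mem_range.mpr ((mem_filter.mp hb).2)
  · intro v hv
    apply mem_filter.mpr
    refine ⟨mem_univ _, ?_⟩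
    show τ (τ.symm ⟨v, _⟩) < τ a
    rw [Equiv.apply_symm_apply]
    exact mem_range.mp hv
  · intro b hb
    show τ.symm ⟨((τ b : Fin m) : ℕ), _⟩ = b
    rw [Fin.eta]
    exact Equiv.symm_apply_apply τ b
  · intro v hv
    show ((τ (τ.symm ⟨v, _⟩) : Fin m) : ℕ) = v
    rw [Equiv.apply_symm_apply]

lemma Phi_Psi (hc : (Cst n I).card = m) (h0 : 0 ∉ I) (τ : Equiv.Perm (Fin m)) :
    Phi hc (Psi hc h0 τ) = τ := by
  apply Equiv.ext
  intro a
  apply Fin.ext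
  rw [Phi_apply]
  unfold rk
  have hfil : (univ.filter
        (fun b => pV (Psi hc h0 τ) (eS hc b) < pV (Psi hc h0 τ) (eS hc a)))
      = univ.filter (fun b => τ b < τ a) := by
    apply filter_congr
    intro b _
    rw [pV_Psi_eS hc h0 τ b, pV_Psi_eS hc h0 τ a]
    constructor
    · intro h
      rcases lt_trichotomy (τ b) (τ a) with h' | h' | h'
      · exact h'
      · exact absurd (congrArg (Vv hc τ) (τ.injective h')) (by omega)
      · exact absurd (Vv_mono hc (le_of_lt h')) (by omega)
    · intro h
      have h1 := Vv_lt hc h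
      have h2 := Lb_pos (eS_mem hc b)
      omega
  rw [hfil, card_lt_perm]

lemma card_lt_val {σ : Equiv.Perm (Fin n)} {c : ℕ} (hcn : c < n) :
    ((range n).filter (fun p => pV σ p < c)).card = c := by
  refine Finset.card_bij' (t := range c) (fun p _ => pV σ p)
    (fun v hv => ((σ.symm ⟨v, lt_trans (mem_range.mp hv) hcn⟩ : Fin n) : ℕ)) ?_ ?_ ?_ ?_
    |>.trans (card_range c)
  · intro p hp
    exact mem_range.mpr ((mem_filter.mp hp).2)
  · intro v hv
    apply mem_filter.mpr
    refine ⟨mem_range.mpr (σ.symm ⟨v, _⟩).isLt, ?_⟩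
    rw [pV_apply_val, Equiv.apply_symm_apply]
    exact mem_range.mp hv
  · intro p hp
    have hpn : p < n := mem_range.mp (mem_filter.mp hp).1
    have h1 : pV σ p = ((σ ⟨p, hpn⟩ : Fin n) : ℕ) := pV_eq_val hpn
    have h2 : (⟨pV σ p, lt_trans (mem_range.mp (mem_range.mpr ((mem_filter.mp hp).2))) hcn⟩ : Fin n)
        = σ ⟨p, hpn⟩ := Fin.ext h1
    show ((σ.symm ⟨pV σ p, _⟩ : Fin n) : ℕ) = p
    rw [h2, Equiv.symm_apply_apply]
  · intro v hv
    show pV σ ((σ.symm ⟨v, _⟩ : Fin n) : ℕ) = v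
    rw [pV_apply_val, Equiv.apply_symm_apply]

lemma tiling (hc : (Cst n I).card = m) (h0 : 0 ∉ I) {σ : Equiv.Perm (Fin n)}
    (hA : ∀ j, j + 1 ∈ I → pV σ (j + 1) = pV σ j + 1) (a : Fin m) :
    pV σ (eS hc a) = ∑ b ∈ univ.filter (fun b => pV σ (eS hc b) < pV σ (eS hc a)),
      Lb n I (eS hc b) := by
  set c := pV σ (eS hc a) with hcdef
  have hcn : c < n := pV_lt σ (eS_lt_n hc a)
  have h2 : (range n).filter (fun p => pV σ p < c)
      = (range n).filter (fun p => pV σ (st I p) < c) := by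
    apply filter_congr
    intro p hp
    rw [mem_range] at hp
    have hb := pV_block hA p hp
    have hstle := st_le I p
    constructor
    · intro h; omega
    · intro h
      by_contra hcon
      push_neg at hcon
      set q := st I p + (c - pV σ (st I p)) with hqdef
      have hq : q ≤ p := by omega
      have hqn : q < n := by omega
      have hstq : st I q = st I p := st_between p q (by omega) hq
      have hbq := pV_block hA q hqn
      have hpVq : pV σ q = c := by rw [hstq] at hbq; omega
      have heq : q = eS hc a := pV_inj σ hqn (eS_lt_n hc a) (by rw [hpVq])
      have hsa := eS_st hc a
      rw [heq] at hstq
      omega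
  have h3 : ((range n).filter (fun p => pV σ (st I p) < c)).card
      = ∑ s ∈ (Cst n I).filter (fun s => pV σ s < c),
          (((range n).filter (fun p => pV σ (st I p) < c)).filter (fun p => st I p = s)).card := by
    apply card_eq_sum_card_fiberwise
    intro p hp
    rw [mem_coe, mem_filter, mem_range] at hp
    exact mem_coe.mpr (mem_filter.mpr ⟨st_mem_Cst h0 hp.1, hp.2⟩)
  have h4 : ∀ s ∈ (Cst n I).filter (fun s => pV σ s < c),
      (((range n).filter (fun p => pV σ (st I p) < c)).filter (fun p => st I p = s)).card
        = Lb n I s := by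
    intro s hs
    rw [mem_filter] at hs
    unfold Lb
    congr 1
    rw [filter_filter]
    apply filter_congr
    intro p _
    constructor
    · exact fun h => h.2
    · intro h
      exact ⟨by rw [h]; exact hs.2, h⟩
  have h5 : ∑ b ∈ univ.filter (fun b => pV σ (eS hc b) < c), Lb n I (eS hc b)
      = ∑ s ∈ (Cst n I).filter (fun s => pV σ s < c), Lb n I s := by
    apply sum_bij (fun (b : Fin m) _ => eS hc b)
    · intro b hb
      exact mem_filter.mpr ⟨eS_mem hc b, (mem_filter.mp hb).2⟩
    · exact fun a₁ _ a₂ _ h => eS_inj hc h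
    · intro s hs
      rw [mem_filter] at hs
      obtain ⟨b, hb⟩ := eS_surj hc hs.1
      exact ⟨b, mem_filter.mpr ⟨mem_univ b, by rw [hb]; exact hs.2⟩, hb⟩
    · exact fun b _ => rfl
  calc pV σ (eS hc a) = ((range n).filter (fun p => pV σ p < c)).card := (card_lt_val hcn).symm
    _ = ((range n).filter (fun p => pV σ (st I p) < c)).card := by rw [h2]
    _ = ∑ s ∈ (Cst n I).filter (fun s => pV σ s < c), Lb n I s := by
        rw [h3]; exact sum_congr rfl h4
    _ = ∑ b ∈ univ.filter (fun b => pV σ (eS hc b) < c), Lb n I (eS hc b) := h5.symm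

lemma Vv_Phi (hc : (Cst n I).card = m) (h0 : 0 ∉ I) {σ : Equiv.Perm (Fin n)}
    (hA : ∀ j, j + 1 ∈ I → pV σ (j + 1) = pV σ j + 1) (a : Fin m) :
    Vv hc (Phi hc σ) a = pV σ (eS hc a) := by
  rw [Vv]
  have hfil : univ.filter (fun b => Phi hc σ b < Phi hc σ a)
      = univ.filter (fun b => pV σ (eS hc b) < pV σ (eS hc a)) := by
    apply filter_congr
    intro b _
    simp only [Fin.lt_def, Phi_apply]
    constructor
    · intro h
      rcases lt_trichotomy (pV σ (eS hc b)) (pV σ (eS hc a)) with h' | h' | h'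
      · exact h'
      · exact absurd (congrArg (rk hc σ) (eS_inj hc (pV_inj σ (eS_lt_n hc b) (eS_lt_n hc a) h')))
          (by omega)
      · exact absurd (rk_lt_rk hc σ h') (by omega)
    · exact fun h' => rk_lt_rk hc σ h'
  rw [hfil]
  exact (tiling hc h0 hA a).symm

lemma Psi_Phi (hc : (Cst n I).card = m) (h0 : 0 ∉ I) {σ : Equiv.Perm (Fin n)}
    (hA : ∀ j, j + 1 ∈ I → pV σ (j + 1) = pV σ j + 1) :
    Psi hc h0 (Phi hc σ) = σ := by
  apply Equiv.ext
  intro p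
  apply Fin.ext
  have h1 : ((Psi hc h0 (Phi hc σ) p : Fin n) : ℕ) = pV (Psi hc h0 (Phi hc σ)) (p : ℕ) :=
    (pV_apply_val _ p).symm
  rw [h1, pV_Psi hc h0 _ p.isLt, Vv_Phi hc h0 hA, eS_blk]
  rw [← pV_apply_val σ p]
  exact (pV_block hA p p.isLt).symm

lemma cardM {n : ℕ} (hn : 1 ≤ n) {I : Finset ℕ} (hI : I ⊆ Finset.Icc 1 (n - 1)) :
    ((univ : Finset (Equiv.Perm (Fin n))).filter (fun σ => I ⊆ Mset σ)).card
      = Nat.factorial (n - I.card) := by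
  have hIn : ∀ i ∈ I, 1 ≤ i ∧ i < n := fun i hi => by
    have := mem_Icc.mp (hI hi); omega
  have h0 : 0 ∉ I := fun h => by have := (hIn 0 h).1; omega
  have hc : (Cst n I).card = n - I.card := Cst_card hIn
  have hcard : ((univ : Finset (Equiv.Perm (Fin n))).filter (fun σ => I ⊆ Mset σ)).card
      = ((univ : Finset (Equiv.Perm (Fin (n - I.card))))).card := by
    refine card_bij' (fun σ _ => Phi hc σ) (fun τ _ => Psi hc h0 τ) ?_ ?_ ?_ ?_
    · intro σ _; exact mem_univ _
    · intro τ _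
      exact mem_filter.mpr ⟨mem_univ _, (subset_Mset_iff hI hn _).mpr (Psi_mem hc h0 hIn τ)⟩
    · intro σ hσ
      exact Psi_Phi hc h0 ((subset_Mset_iff hI hn σ).mp (mem_filter.mp hσ).2)
    · intro τ _; exact Phi_Psi hc h0 τ
  rw [hcard, card_univ, Fintype.card_perm, Fintype.card_fin]

lemma cardB {n : ℕ} (hn : 1 ≤ n) {I : Finset ℕ} (hI : I ⊆ Finset.Icc 1 (n - 1)) :
    ((univ : Finset (Equiv.Perm (Fin n))).filter (fun σ => I ⊆ Gset σ)).card
      = Nat.factorial (n - I.card) := by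
  have hIn : ∀ i ∈ I, 1 ≤ i ∧ i < n := fun i hi => by
    have := mem_Icc.mp (hI hi); omega
  have hiff : ∀ σ : Equiv.Perm (Fin n),
      (I ⊆ Gset σ) ↔ (∀ a : Fin n, ¬ ((a : ℕ) + 1 ∉ I) → σ a = a) := by
    intro σ
    rw [subset_Gset_iff hI hn]
    constructor
    · intro h a ha
      rw [not_not] at ha
      have h1 := h (a : ℕ) ha
      rw [pV_apply_val σ a] at h1
      exact Fin.ext h1
    · intro h j hj
      have hjn : j < n := by have := (hIn _ hj).2; omega
      have h1 := h ⟨j, hjn⟩ (by simpa using hj)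
      rw [pV_eq_val hjn, h1]
  have h1 : ((univ : Finset (Equiv.Perm (Fin n))).filter (fun σ => I ⊆ Gset σ))
      = univ.filter (fun σ : Equiv.Perm (Fin n) => ∀ a : Fin n, ¬ ((a : ℕ) + 1 ∉ I) → σ a = a) :=
    filter_congr fun σ _ => hiff σ
  rw [h1]
  rw [← Fintype.card_subtype]
  rw [← Fintype.card_congr (Equiv.Perm.subtypeEquivSubtypePerm (fun a : Fin n => (a : ℕ) + 1 ∉ I))]
  rw [Fintype.card_perm]
  congr 1
  rw [Fintype.card_subtype]
  have h3 : ((univ : Finset (Fin n)).filter (fun (a : Fin n) => (a : ℕ) + 1 ∈ I)).card = I.card := by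
    refine Finset.card_bij' (t := I) (fun (a : Fin n) _ => (a : ℕ) + 1)
      (fun i hi => ⟨i - 1, by have := hIn i hi; omega⟩) ?_ ?_ ?_ ?_
    · intro a ha
      exact (mem_filter.mp ha).2
    · intro i hi
      apply mem_filter.mpr
      refine ⟨mem_univ _, ?_⟩
      have := hIn i hi
      show i - 1 + 1 ∈ I
      rw [Nat.sub_add_cancel this.1]
      exact hi
    · intro a ha
      apply Fin.ext
      show (a : ℕ) + 1 - 1 = (a : ℕ)
      omega
    · intro i hi
      have := hIn i hi
      show i - 1 + 1 = i
      omega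
  have h4 := card_filter_add_card_filter_not
    (s := (univ : Finset (Fin n))) (p := fun a : Fin n => (a : ℕ) + 1 ∈ I)
  rw [h3, card_univ, Fintype.card_fin] at h4
  omega

end DEG

/-- The Diaconis–Evans–Graham theorem. -/
theorem diaconis_evans_graham (n : ℕ) (hn : 1 ≤ n) (I : Finset ℕ)
    (hI : I ⊆ Finset.Icc 1 (n - 1)) :
    ((Finset.univ : Finset (Equiv.Perm (Fin n))).filter (fun σ => Mset σ = I)).card =
    ((Finset.univ : Finset (Equiv.Perm (Fin n))).filter (fun σ => Gset σ = I)).card := by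
  classical
  have hMsub : ∀ σ : Equiv.Perm (Fin n), Mset σ ⊆ Finset.Icc 1 (n - 1) := fun σ =>
    filter_subset _ _
  have hGsub : ∀ σ : Equiv.Perm (Fin n), Gset σ ⊆ Finset.Icc 1 (n - 1) := fun σ =>
    filter_subset _ _
  have split : ∀ (F : Equiv.Perm (Fin n) → Finset ℕ), (∀ σ, F σ ⊆ Finset.Icc 1 (n - 1)) →
      ∀ J ⊆ Finset.Icc 1 (n - 1),
      (univ.filter (fun σ => J ⊆ F σ)).card
        = (univ.filter (fun σ => F σ = J)).card
          + ∑ K ∈ ((Finset.Icc 1 (n - 1)).powerset.filter (fun K => J ⊂ K)),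
              (univ.filter (fun σ => F σ = K)).card := by
    intro F hF J hJ
    have h1 : (univ.filter (fun σ => J ⊆ F σ)).card
        = ∑ K ∈ ((Finset.Icc 1 (n - 1)).powerset.filter (fun K => J ⊆ K)),
            ((univ.filter (fun σ => J ⊆ F σ)).filter (fun σ => F σ = K)).card :=
      card_eq_sum_card_fiberwise (fun σ hσ =>
        mem_filter.mpr ⟨mem_powerset.mpr (hF σ), (mem_filter.mp hσ).2⟩)
    have h2 : ∀ K ∈ ((Finset.Icc 1 (n - 1)).powerset.filter (fun K => J ⊆ K)),
        ((univ.filter (fun σ => J ⊆ F σ)).filter (fun σ => F σ = K)).card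
          = (univ.filter (fun σ => F σ = K)).card := by
      intro K hK
      have hJK := (mem_filter.mp hK).2
      congr 1
      rw [filter_filter]
      apply filter_congr
      intro σ _
      constructor
      · exact fun h => h.2
      · exact fun h => ⟨by rw [h]; exact hJK, h⟩
    have h3 : ((Finset.Icc 1 (n - 1)).powerset.filter (fun K => J ⊆ K))
        = insert J ((Finset.Icc 1 (n - 1)).powerset.filter (fun K => J ⊂ K)) := by
      ext K
      simp only [mem_insert, mem_filter, mem_powerset]
      constructor
      · rintro ⟨hKI, hJK⟩
        by_cases hKJ : K = J
        · exact Or.inl hKJ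
        · exact Or.inr ⟨hKI, Finset.ssubset_iff_subset_ne.mpr ⟨hJK, fun h => hKJ h.symm⟩⟩
      · rintro (h | ⟨hKI, hJK⟩)
        · subst h; exact ⟨hJ, Finset.Subset.refl _⟩
        · exact ⟨hKI, hJK.subset⟩
    have hJnot : J ∉ ((Finset.Icc 1 (n - 1)).powerset.filter (fun K => J ⊂ K)) := by
      simp only [mem_filter]
      exact fun h => absurd h.2 (ssubset_irrefl J)
    rw [h1, sum_congr rfl h2, h3, sum_insert hJnot]
  have key : ∀ k : ℕ, ∀ J : Finset ℕ, J ⊆ Finset.Icc 1 (n - 1) → (n - 1) - J.card = k →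
      ((univ : Finset (Equiv.Perm (Fin n))).filter (fun σ => Mset σ = J)).card
        = ((univ : Finset (Equiv.Perm (Fin n))).filter (fun σ => Gset σ = J)).card := by
    intro k
    induction k using Nat.strong_induction_on with
    | _ k ih =>
      intro J hJ hk
      have h1 := split Mset hMsub J hJ
      have h2 := split Gset hGsub J hJ
      have hS : ((univ : Finset (Equiv.Perm (Fin n))).filter (fun σ => J ⊆ Mset σ)).card
          = ((univ : Finset (Equiv.Perm (Fin n))).filter (fun σ => J ⊆ Gset σ)).card := by
        rw [DEG.cardM hn hJ, DEG.cardB hn hJ]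
      have hIcc : (Finset.Icc 1 (n - 1)).card = n - 1 := by
        rw [Nat.card_Icc]; omega
      have hQ : ∑ K ∈ ((Finset.Icc 1 (n - 1)).powerset.filter (fun K => J ⊂ K)),
            ((univ : Finset (Equiv.Perm (Fin n))).filter (fun σ => Mset σ = K)).card
          = ∑ K ∈ ((Finset.Icc 1 (n - 1)).powerset.filter (fun K => J ⊂ K)),
            ((univ : Finset (Equiv.Perm (Fin n))).filter (fun σ => Gset σ = K)).card := by
        apply sum_congr rfl
        intro K hK
        rw [mem_filter, mem_powerset] at hK
        have hcard : J.card < K.card := card_lt_card hK.2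
        have hKI : K.card ≤ n - 1 := hIcc ▸ card_le_card hK.1
        exact ih ((n - 1) - K.card) (by omega) K hK.1 rfl
      omega
  exact key ((n - 1) - I.card) I hI rfl
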